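/- Let d ≥ 2 be an integer, r_0 > 0, and let J : [r_0, ∞) → ℝ be continuous with ∫_{r_0}^∞ |J(ρ)| · √(ρ^(2d−2) − r_0^(2d−2)) dρ < ∞. Define K(r) = −(r² / ((d−1) · √((r/r_0)^(2d−2) − 1))) · ∫_{r_0}^r J(ρ) · √((ρ/r_0)^(2d−2) − 1) dρ for r > r_0. Then lim_{r→∞} r^(d−3) · K(r) exists and equals −(1/(d−1)) · ∫_{r_0}^∞ J(ρ) · √(ρ^(2d−2) − r_0^(2d−2)) dρ. -/

import Mathlib

open MeasureTheory

/-- Asymptotics of the momentum-constraint solution: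
`lim_{r→∞} r^(d−3) K(r) = −(1/(d−1)) ∫_{r₀}^∞ J(ρ)√(ρ^(2d−2) − r₀^(2d−2)) dρ`. -/
theorem momentum_entanglement_limit
    (d : ℕ) (hd : 2 ≤ d) (r₀ : ℝ) (hr₀ : 0 < r₀)
    (J : ℝ → ℝ) (hJ : ContinuousOn J (Set.Ici r₀))
    (hInt : IntegrableOn
      (fun ρ : ℝ => |J ρ| * Real.sqrt (ρ ^ (2 * d - 2) - r₀ ^ (2 * d - 2)))
      (Set.Ioi r₀))
    (K : ℝ → ℝ)
    (hK : ∀ r, K r =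
      -(r ^ 2 / (((d : ℝ) - 1) * Real.sqrt ((r / r₀) ^ (2 * d - 2) - 1))) *
        ∫ ρ in r₀..r, J ρ * Real.sqrt ((ρ / r₀) ^ (2 * d - 2) - 1)) :
    Filter.Tendsto (fun r : ℝ => r ^ ((d : ℝ) - 3) * K r) Filter.atTop
      (nhds (-(1 / ((d : ℝ) - 1)) *
        ∫ ρ in Set.Ioi r₀, J ρ * Real.sqrt (ρ ^ (2 * d - 2) - r₀ ^ (2 * d - 2)))) := by
  classical
  set m := 2 * d - 2 with hmdef
  have hm2 : m = (d - 1) * 2 := by omega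
  have hmne : m ≠ 0 := by omega
  set h : ℝ → ℝ := fun ρ => J ρ * Real.sqrt (ρ ^ m - r₀ ^ m) with hh
  -- integrability of h on Ioi r₀
  have hmeas : AEStronglyMeasurable h (volume.restrict (Set.Ioi r₀)) := by
    refine (ContinuousOn.aestronglyMeasurable ?_ measurableSet_Ioi)
    exact ((hJ.mono Set.Ioi_subset_Ici_self).mul
      (((continuous_pow m).sub continuous_const).continuousOn.sqrt))
  have hInth : IntegrableOn h (Set.Ioi r₀) := by
    refine hInt.mono' hmeas ?_
    filter_upwards with ρ
    simp only [hh, Real.norm_eq_abs, abs_mul, abs_of_nonneg (Real.sqrt_nonneg _), le_refl]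
  -- interval integral tends to the improper integral
  have hB : Filter.Tendsto (fun r : ℝ => ∫ ρ in r₀..r, h ρ) Filter.atTop
      (nhds (∫ ρ in Set.Ioi r₀, h ρ)) :=
    intervalIntegral_tendsto_integral_Ioi r₀ hInth Filter.tendsto_id
  -- the prefactor r^(d-1)/√(r^m - r₀^m) tends to 1
  have hA : Filter.Tendsto (fun r : ℝ => r ^ (d - 1) / Real.sqrt (r ^ m - r₀ ^ m))
      Filter.atTop (nhds 1) := by
    have hdiv : Filter.Tendsto (fun r : ℝ => r₀ / r) Filter.atTop (nhds 0) :=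
      Filter.Tendsto.div_atTop tendsto_const_nhds Filter.tendsto_id
    have h0 : Filter.Tendsto (fun r : ℝ => (r₀ / r) ^ m) Filter.atTop (nhds 0) := by
      simpa [zero_pow hmne] using hdiv.pow m
    have h1 : Filter.Tendsto (fun r : ℝ => Real.sqrt (1 - (r₀ / r) ^ m))
        Filter.atTop (nhds 1) := by
      have hsub : Filter.Tendsto (fun r : ℝ => 1 - (r₀ / r) ^ m) Filter.atTop
          (nhds (1 - 0)) := tendsto_const_nhds.sub h0
      have := hsub.sqrt
      simpa using this
    have h2 : Filter.Tendsto (fun r : ℝ => (Real.sqrt (1 - (r₀ / r) ^ m))⁻¹)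
        Filter.atTop (nhds 1) := by
      simpa using h1.inv₀ one_ne_zero
    refine h2.congr' ?_
    filter_upwards [Filter.eventually_gt_atTop r₀] with r hr
    have hrpos : 0 < r := lt_trans hr₀ hr
    have hsplit : r ^ m - r₀ ^ m = (r ^ (d-1))^2 * (1 - (r₀ / r) ^ m) := by
      rw [← pow_mul, ← hm2]
      field_simp
      rw [div_pow, mul_sub, mul_one, mul_div_assoc', mul_div_cancel_left₀ _ (pow_ne_zero m hrpos.ne')]
    have hs1 : 0 < 1 - (r₀ / r) ^ m := by
      have : (r₀ / r) ^ m < 1 := by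
        apply pow_lt_one₀ (by positivity) _ hmne
        rw [div_lt_one hrpos]; exact hr
      linarith
    rw [hsplit, Real.sqrt_mul (by positivity), Real.sqrt_sq (by positivity)]
    rw [div_mul_cancel_left₀ (by positivity : (r:ℝ) ^ (d - 1) ≠ 0)]
  -- the key combined limit
  have key : Filter.Tendsto
      (fun r : ℝ => (r ^ (d - 1) / Real.sqrt (r ^ m - r₀ ^ m)) *
        (-(1 / ((d : ℝ) - 1)) * ∫ ρ in r₀..r, h ρ))
      Filter.atTop
      (nhds (-(1 / ((d : ℝ) - 1)) * ∫ ρ in Set.Ioi r₀, h ρ)) := by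
    have := hA.mul (Filter.Tendsto.const_mul (-(1 / ((d : ℝ) - 1))) hB)
    simpa using this
  refine key.congr' ?_
  filter_upwards [Filter.eventually_gt_atTop r₀] with r hr
  have hrpos : 0 < r := lt_trans hr₀ hr
  have hc : (0:ℝ) < (d : ℝ) - 1 := by
    have : (2:ℝ) ≤ d := by exact_mod_cast hd
    linarith
  have hP : (0:ℝ) < r₀ ^ (d - 1) := by positivity
  have hS : (0:ℝ) < Real.sqrt (r ^ m - r₀ ^ m) := by
    apply Real.sqrt_pos.mpr
    have : r₀ ^ m < r ^ m := by
      apply pow_lt_pow_left₀ hr hr₀.le hmne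
    linarith
  -- identity for the square roots
  have hsq : ∀ x : ℝ, r₀ ≤ x →
      Real.sqrt ((x / r₀) ^ m - 1) = Real.sqrt (x ^ m - r₀ ^ m) / r₀ ^ (d - 1) := by
    intro x hx
    have h1 : (x / r₀) ^ m - 1 = (x ^ m - r₀ ^ m) / r₀ ^ m := by
      field_simp
      rw [sub_mul, one_mul, div_pow, div_mul_cancel₀ _ (pow_ne_zero m hr₀.ne')]
    have h2 : 0 ≤ x ^ m - r₀ ^ m := by
      have : r₀ ^ m ≤ x ^ m := pow_le_pow_left₀ hr₀.le hx m
      linarith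
    have h3 : Real.sqrt (r₀ ^ m) = r₀ ^ (d - 1) := by
      rw [hm2, pow_mul, Real.sqrt_sq (by positivity)]
    rw [h1, Real.sqrt_div h2, h3]
  -- rewrite the interval integral
  have hIeq : (∫ ρ in r₀..r, J ρ * Real.sqrt ((ρ / r₀) ^ m - 1)) =
      (∫ ρ in r₀..r, h ρ) / r₀ ^ (d - 1) := by
    rw [← intervalIntegral.integral_div]
    apply intervalIntegral.integral_congr
    intro ρ hρ
    rw [Set.uIcc_of_le hr.le] at hρ
    show J ρ * Real.sqrt ((ρ / r₀) ^ m - 1) = (J ρ * Real.sqrt (ρ ^ m - r₀ ^ m)) / r₀ ^ (d - 1)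
    rw [hsq ρ hρ.1, mul_div_assoc]
  -- the exponent identity
  have hpow : r ^ ((d : ℝ) - 3) * r ^ 2 = r ^ (d - 1) := by
    rw [← Real.rpow_natCast r 2, ← Real.rpow_add hrpos, ← Real.rpow_natCast r (d - 1)]
    congr 1
    have : ((d - 1 : ℕ) : ℝ) = (d : ℝ) - 1 := by
      push_cast [Nat.cast_sub (by omega : 1 ≤ d)]; ring
    rw [this]; ring
  -- now the algebra
  rw [hK r, hIeq, hsq r hr.le]
  have expand : r ^ ((d : ℝ) - 3) *
      (-(r ^ 2 / (((d : ℝ) - 1) * (Real.sqrt (r ^ m - r₀ ^ m) / r₀ ^ (d - 1)))) *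
        ((∫ ρ in r₀..r, h ρ) / r₀ ^ (d - 1))) =
      -((r ^ ((d : ℝ) - 3) * r ^ 2) / (((d : ℝ) - 1) * (Real.sqrt (r ^ m - r₀ ^ m) / r₀ ^ (d - 1))) *
        ((∫ ρ in r₀..r, h ρ) / r₀ ^ (d - 1))) := by ring
  rw [expand, hpow]
  field_simp
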